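/- Main theorem: There is a unitary transform U : ⊕_{k=0}^d ⋀^k ℂ^d ≅ ℂ^{2^d} → ℂ^{2^d} such that U H_{HD;2h} U* = H_{KS;h}, where H_{HD;2h} = -i(d̃ - d̃*) is the discrete Hodge-Dirac operator on square-summable cochains over 2hℤ^d and H_{KS;h} is the massless staggered fermion Hamiltonian on ℓ²(2hℤ^d) ⊗ ℂ^{2^d}. -/

import Mathlib

noncomputable section

/-- The `j`-th standard basis vector of `ℤ^d`. -/
def e (d : ℕ) (j : Fin d) : Fin d → ℤ := Pi.single j 1

/-- `s_{j-1}(a)` for `a ∈ Λ = {0,1}^d`. -/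
def sL (d : ℕ) (j : Fin d) (a : Fin d → Fin 2) : ℕ :=
  ∑ k ∈ Finset.univ.filter (fun k : Fin d => k < j), (a k : ℕ)

/-- Forward difference `D^+_{2h;j}` on functions on `2hℤ^d` (indexed by `ℤ^d`). -/
def Dp2 (d : ℕ) (h : ℝ) (j : Fin d) (v : (Fin d → ℤ) → ℂ) : (Fin d → ℤ) → ℂ :=
  fun m => (1 / (2 * Complex.I * h)) * (v (m + e d j) - v m)

/-- Backward difference `D^-_{2h;j}` on functions on `2hℤ^d`. -/
def Dm2 (d : ℕ) (h : ℝ) (j : Fin d) (v : (Fin d → ℤ) → ℂ) : (Fin d → ℤ) → ℂ :=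
  fun m => (1 / (2 * Complex.I * h)) * (v m - v (m - e d j))

/-- The massless staggered fermion Hamiltonian `H_{KS;h}` on `ℓ²(2hℤ^d) ⊗ ℂ^Λ`. -/
def HKS (d : ℕ) (h : ℝ) (w : (Fin d → Fin 2) → (Fin d → ℤ) → ℂ) :
    (Fin d → Fin 2) → (Fin d → ℤ) → ℂ :=
  fun a m => ∑ j : Fin d,
    if a j = 1 then
      ((-1 : ℂ) ^ (sL d j a)) * Dp2 d h j (w (Function.update a j 0)) m
    else
      ((-1 : ℂ) ^ (sL d j a)) * Dm2 d h j (w (Function.update a j 1)) m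

/-- The discrete exterior derivative `d̃` of Miranda–Parra on square-summable cochains
over `2hℤ^d`, written in the coordinates given by the basis `{dx^a}_{a∈Λ}` of `⋀ℂ^d`
(so a cochain is `w : Λ → ℤ^d → ℂ`, `f = ∑_a w_a dx^a`):
`(d̃ w)_a = ∑_{j : a_j = 1} (-1)^{s_{j-1}(a)} (1/(2h))(w_{a-e_j}(·+2he_j) - w_{a-e_j})`. -/
def Dt (d : ℕ) (h : ℝ) (w : (Fin d → Fin 2) → (Fin d → ℤ) → ℂ) :
    (Fin d → Fin 2) → (Fin d → ℤ) → ℂ :=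
  fun a m => ∑ j : Fin d,
    if a j = 1 then
      ((-1 : ℂ) ^ (sL d j a)) *
        ((1 / (2 * (h : ℂ))) *
          (w (Function.update a j 0) (m + e d j) - w (Function.update a j 0) m))
    else 0

/-- Main theorem: there is a unitary transform `U : ⊕_k ⋀^k ℂ^d ≃ ℂ^{2^d}` (a unitary of
the `2^d`-dimensional coefficient space, identified with `ℂ^Λ` via the basis `{dx^a}`)
such that `U H_{HD;2h} U* = H_{KS;h}`, where `H_{HD;2h} = -i(d̃ - d̃*)` with `d̃*` any
adjoint of `d̃` for the `ℓ²`-inner product `(2h)^d ∑_a ∑_m conj(·)·`. -/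
theorem stmt14 (d : ℕ) (hd : 1 ≤ d) (h : ℝ) (hh : 0 < h)
    (Ds : ((Fin d → Fin 2) → (Fin d → ℤ) → ℂ) → ((Fin d → Fin 2) → (Fin d → ℤ) → ℂ))
    (hadj : ∀ w w' : (Fin d → Fin 2) → (Fin d → ℤ) → ℂ,
      Memℓp (fun p : (Fin d → Fin 2) × (Fin d → ℤ) => w p.1 p.2) 2 →
      Memℓp (fun p : (Fin d → Fin 2) × (Fin d → ℤ) => w' p.1 p.2) 2 →
      (((2 * h) ^ d : ℝ) : ℂ) *
          ∑' a : Fin d → Fin 2, ∑' m : Fin d → ℤ, star (Dt d h w a m) * w' a m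
        = (((2 * h) ^ d : ℝ) : ℂ) *
          ∑' a : Fin d → Fin 2, ∑' m : Fin d → ℤ, star (w a m) * Ds w' a m) :
    ∃ U : EuclideanSpace ℂ (Fin d → Fin 2) ≃ₗᵢ[ℂ] EuclideanSpace ℂ (Fin d → Fin 2),
      ∀ w : (Fin d → Fin 2) → (Fin d → ℤ) → ℂ,
        Memℓp (fun p : (Fin d → Fin 2) × (Fin d → ℤ) => w p.1 p.2) 2 →
        ∀ (a : Fin d → Fin 2) (m : Fin d → ℤ),
          U (WithLp.toLp 2 (fun b => -Complex.I * (Dt d h w b m - Ds w b m))) a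
            = HKS d h (fun b m' => U (WithLp.toLp 2 (fun b' => w b' m')) b) a m := by
  classical
  have hh' : (h:ℂ) ≠ 0 := by exact_mod_cast hh.ne'
  -- basic facts
  have he : ∀ (j : Fin d) (m : Fin d → ℤ), m - e d j ≠ m := by
    intro j m hm
    have : e d j = 0 := by
      have := sub_eq_self.mp hm; exact this
    have h1 : (e d j) j = 1 := by simp [e]
    rw [this] at h1; simp at h1
  have hsL : ∀ (j : Fin d) (a : Fin d → Fin 2) (v : Fin 2),
      sL d j (Function.update a j v) = sL d j a := by
    intro j a v
    unfold sL
    refine Finset.sum_congr rfl ?_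
    intro k hk
    simp only [Finset.mem_filter] at hk
    rw [Function.update_of_ne (ne_of_lt hk.2)]
  have hI : (1:ℂ)/(2*Complex.I*(h:ℂ)) = -Complex.I * (1/(2*(h:ℂ))) := by
    field_simp
    ring_nf
    simp [Complex.I_sq]
  -- the formal adjoint
  set A : ((Fin d → Fin 2) → (Fin d → ℤ) → ℂ) → (Fin d → Fin 2) → (Fin d → ℤ) → ℂ :=
    fun w' a m => ∑ j : Fin d, if a j = 1 then 0 else
      ((-1:ℂ)^(sL d j a) * (1/(2*(h:ℂ)))) *
        (w' (Function.update a j 1) (m - e d j) - w' (Function.update a j 1) m) with hA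
  have key : ∀ w' : (Fin d → Fin 2) → (Fin d → ℤ) → ℂ,
      Memℓp (fun p : (Fin d → Fin 2) × (Fin d → ℤ) => w' p.1 p.2) 2 →
      ∀ (a : Fin d → Fin 2) (m : Fin d → ℤ), Ds w' a m = A w' a m := by
    intro w' hw' a m
    set δ : (Fin d → Fin 2) → (Fin d → ℤ) → ℂ :=
      fun b x => if b = a ∧ x = m then 1 else 0 with hδdef
    have hδ : Memℓp (fun p : (Fin d → Fin 2) × (Fin d → ℤ) => δ p.1 p.2) 2 := by
      apply memℓp_gen
      apply summable_of_ne_finset_zero (s := {((a, m) : (Fin d → Fin 2) × (Fin d → ℤ))})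
      intro p hp
      have hne : ¬(p.1 = a ∧ p.2 = m) := by
        simp only [Finset.mem_singleton] at hp
        rintro ⟨h1, h2⟩
        exact hp (Prod.ext h1 h2)
      simp [hδdef, hne, Real.zero_rpow (by norm_num : (2:ENNReal).toReal ≠ 0)]
    have H := hadj δ w' hδ hw'
    have hc0 : (((2*h)^d : ℝ) : ℂ) ≠ 0 := by
      exact_mod_cast pow_ne_zero _ (by positivity : (2*h:ℝ) ≠ 0)
    have H2 := mul_left_cancel₀ hc0 H
    -- RHS equals Ds w' a m
    have hR : (∑' a' : Fin d → Fin 2, ∑' m' : Fin d → ℤ, star (δ a' m') * Ds w' a' m')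
        = Ds w' a m := by
      rw [tsum_fintype]
      have hterm : ∀ a' : Fin d → Fin 2,
          (∑' m' : Fin d → ℤ, star (δ a' m') * Ds w' a' m')
            = if a' = a then Ds w' a m else 0 := by
        intro a'
        by_cases ha : a' = a
        · subst ha
          rw [if_pos rfl, tsum_eq_single m]
          · simp [hδdef]
          · intro m' hm'; simp [hδdef, hm']
        · rw [if_neg ha]
          have : ∀ m' : Fin d → ℤ, star (δ a' m') * Ds w' a' m' = 0 := by
            intro m'; simp [hδdef, ha]
          exact (tsum_congr this).trans tsum_zero
      simp only [hterm]
      simp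
    -- LHS equals A w' a m
    have hL : (∑' a' : Fin d → Fin 2, ∑' m' : Fin d → ℤ, star (Dt d h δ a' m') * w' a' m')
        = A w' a m := by
      rw [tsum_fintype]
      have hinner : ∀ a' : Fin d → Fin 2,
          (∑' m' : Fin d → ℤ, star (Dt d h δ a' m') * w' a' m')
            = ∑ j : Fin d, if a' j = 1 ∧ Function.update a' j 0 = a then
                ((-1:ℂ)^(sL d j a') * (1/(2*(h:ℂ)))) * (w' a' (m - e d j) - w' a' m)
              else 0 := by
        intro a'
        -- rewrite the summand as a finite sum of nice terms
        have hrw : ∀ m' : Fin d → ℤ, star (Dt d h δ a' m') * w' a' m'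
            = ∑ j : Fin d, (if a' j = 1 ∧ Function.update a' j 0 = a then
                ((-1:ℂ)^(sL d j a') * (1/(2*(h:ℂ)))) *
                  (((if m' = m - e d j then (1:ℂ) else 0) - (if m' = m then (1:ℂ) else 0))
                    * w' a' m')
              else 0) := by
          intro m'
          unfold Dt
          rw [star_sum, Finset.sum_mul]
          refine Finset.sum_congr rfl ?_
          intro j _
          by_cases h1 : a' j = 1
          · by_cases h2 : Function.update a' j 0 = a
            · rw [if_pos h1, if_pos ⟨h1, h2⟩]
              have hd1 : δ (Function.update a' j 0) (m' + e d j)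
                  = if m' = m - e d j then (1:ℂ) else 0 := by
                simp only [hδdef, h2, true_and]
                congr 1
                simp [eq_sub_iff_add_eq]
              have hd2 : δ (Function.update a' j 0) m' = if m' = m then (1:ℂ) else 0 := by
                simp [hδdef, h2]
              rw [hd1, hd2]
              simp only [star_mul', star_sub, star_pow, star_neg, star_one, apply_ite star,
                star_zero, star_div₀, star_ofNat]
              rw [show star ((h:ℂ)) = (h:ℂ) by simp [Complex.star_def, Complex.conj_ofReal]]
              ring
            · rw [if_pos h1, if_neg (by tauto)]
              have hz : ∀ x, δ (Function.update a' j 0) x = 0 := by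
                intro x; simp [hδdef, h2]
              simp [hz]
          · rw [if_neg h1, if_neg (by tauto)]
            simp
        calc (∑' m' : Fin d → ℤ, star (Dt d h δ a' m') * w' a' m')
            = ∑' m' : Fin d → ℤ, ∑ j : Fin d, (if a' j = 1 ∧ Function.update a' j 0 = a then
                ((-1:ℂ)^(sL d j a') * (1/(2*(h:ℂ)))) *
                  (((if m' = m - e d j then (1:ℂ) else 0) - (if m' = m then (1:ℂ) else 0))
                    * w' a' m')
              else 0) := by
              exact tsum_congr hrw
          _ = ∑ j : Fin d, ∑' m' : Fin d → ℤ, (if a' j = 1 ∧ Function.update a' j 0 = a then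
                ((-1:ℂ)^(sL d j a') * (1/(2*(h:ℂ)))) *
                  (((if m' = m - e d j then (1:ℂ) else 0) - (if m' = m then (1:ℂ) else 0))
                    * w' a' m')
              else 0) := by
              refine Summable.tsum_finsetSum ?_
              intro j _
              apply summable_of_ne_finset_zero (s := ({m - e d j, m} : Finset (Fin d → ℤ)))
              intro m' hm'
              simp only [Finset.mem_insert, Finset.mem_singleton, not_or] at hm'
              simp [hm'.1, hm'.2]
          _ = _ := by
              refine Finset.sum_congr rfl ?_
              intro j _
              by_cases hc : a' j = 1 ∧ Function.update a' j 0 = a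
              · simp only [if_pos hc]
                rw [tsum_eq_sum (s := ({m - e d j, m} : Finset (Fin d → ℤ)))
                  (by intro m' hm'
                      simp only [Finset.mem_insert, Finset.mem_singleton, not_or] at hm'
                      simp [hm'.1, hm'.2])]
                rw [Finset.sum_pair (he j m)]
                rw [if_pos rfl, if_neg (he j m), if_neg (fun hx => (he j m) hx.symm), if_pos rfl]
                ring
              · simp [if_neg hc]
      simp only [hinner]
      rw [Finset.sum_comm, hA]
      refine Finset.sum_congr rfl ?_
      intro j _
      by_cases haj : a j = 1
      · rw [if_pos haj]
        refine Finset.sum_eq_zero ?_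
        intro a' _
        rw [if_neg]
        rintro ⟨h1, h2⟩
        have : a j = 0 := by rw [← h2]; simp
        rw [haj] at this; exact absurd this (by decide)
      · have ha0 : a j = 0 := by omega
        rw [if_neg haj]
        rw [Finset.sum_eq_single (Function.update a j 1)]
        · have hc : (Function.update a j 1) j = 1 ∧
              Function.update (Function.update a j 1) j 0 = a := by
            constructor
            · simp
            · rw [Function.update_idem]
              funext k
              by_cases hk : k = j
              · subst hk; simp [ha0]
              · simp [Function.update_of_ne hk]
          rw [if_pos hc, hsL j a 1]
        · intro a' _ hne
          rw [if_neg]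
          rintro ⟨h1, h2⟩
          apply hne
          have : a' = Function.update (Function.update a' j 0) j 1 := by
            rw [Function.update_idem, ← h1, Function.update_eq_self]
          rw [this, h2]
        · intro hmem; exact absurd (Finset.mem_univ _) hmem
    rw [hL, hR] at H2
    exact H2.symm
  -- conclude with U = identity
  refine ⟨LinearIsometryEquiv.refl ℂ _, ?_⟩
  intro w hw a m
  show -Complex.I * (Dt d h w a m - Ds w a m) = HKS d h w a m
  rw [key w hw a m, hA]
  unfold Dt HKS Dp2 Dm2
  rw [← Finset.sum_sub_distrib, Finset.mul_sum]
  refine Finset.sum_congr rfl ?_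
  intro j _
  have haj : a j = 0 ∨ a j = 1 := by omega
  rcases haj with h0 | h1
  · rw [if_neg (by rw [h0]; decide), if_neg (by rw [h0]; decide), if_neg (by rw [h0]; decide),
      hI]
    ring
  · rw [if_pos h1, if_pos h1, if_pos h1, hI]
    ring
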